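/- Fix a positive integer n and let a_k = π^{−1/2} ∫_ℝ ω^k e^{−ω²} dω for k = 0,…,n−1 be the Gaussian moments. For every tuple of pairwise distinct reals z = (z_1,…,z_n) there is a unique vector λ(z) = (λ_1,…,λ_n) ∈ ℝ^n with ∑_{i=1}^n λ_i z_i^k = a_k for all k = 0,…,n−1; call λ(z) admissible if λ_i > 0 for all i. Then the set of admissible weight vectors {λ(z) : z_1,…,z_n pairwise distinct and λ(z)_i > 0 for all i} is an open subset of the hyperplane {λ ∈ ℝ^n : ∑_{i=1}^n λ_i = 1} (with its subspace topology). -/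

import Mathlib

/-- The `k`-th moment of the one-dimensional Gaussian measure
`π^{-1/2} e^{-ω²} dω`. -/
noncomputable def gaussMoment (k : ℕ) : ℝ :=
  Real.pi ^ (-(1 : ℝ) / 2) * ∫ ω : ℝ, ω ^ k * Real.exp (-ω ^ 2)

lemma gm0 : gaussMoment 0 = 1 := by
  have h : ∀ ω : ℝ, ω ^ 0 * Real.exp (-ω ^ 2) = Real.exp (-(1:ℝ) * ω ^ 2) := by
    intro ω; norm_num
  rw [gaussMoment]
  simp only [h]
  rw [integral_gaussian, div_one, Real.sqrt_eq_rpow,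
    ← Real.rpow_add Real.pi_pos]
  norm_num

lemma part1 (n : ℕ) (z : Fin n → ℝ) (hz : Function.Injective z) :
    ∃! l : Fin n → ℝ, ∀ k : Fin n, ∑ i, l i * z i ^ (k : ℕ) = gaussMoment k := by
  set A : Matrix (Fin n) (Fin n) ℝ := (Matrix.vandermonde z).transpose with hAdef
  have hdet : IsUnit A.det := by
    rw [isUnit_iff_ne_zero, hAdef, Matrix.det_transpose]
    exact Matrix.det_vandermonde_ne_zero_iff.2 hz
  have hcond : ∀ l : Fin n → ℝ,
      (∀ k : Fin n, ∑ i, l i * z i ^ (k : ℕ) = gaussMoment k) ↔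
      A.mulVec l = fun k : Fin n => gaussMoment (k : ℕ) := by
    intro l
    rw [funext_iff]
    refine forall_congr' fun k => ?_
    rw [Matrix.mulVec, dotProduct]
    simp [hAdef, Matrix.vandermonde, mul_comm]
  refine ⟨A⁻¹.mulVec fun k : Fin n => gaussMoment (k : ℕ), ?_, ?_⟩
  · refine (hcond _).2 ?_
    rw [Matrix.mulVec_mulVec, Matrix.mul_nonsing_inv _ hdet, Matrix.one_mulVec]
  · intro l hl
    rw [hcond l] at hl
    have := congrArg (A⁻¹.mulVec) hl
    rwa [Matrix.mulVec_mulVec, Matrix.nonsing_inv_mul _ hdet, Matrix.one_mulVec] at this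

open ContinuousLinearMap in
lemma powD {m : ℕ} (p₀ : (Fin (m+1) → ℝ) × (Fin (m+1) → ℝ)) (i : Fin (m+1)) (M : ℕ) :
    HasStrictFDerivAt (fun p : (Fin (m+1) → ℝ) × (Fin (m+1) → ℝ) => p.1 i ^ M)
      (((M : ℝ) * p₀.1 i ^ (M - 1)) •
        ((proj i).comp (fst ℝ (Fin (m+1) → ℝ) (Fin (m+1) → ℝ)))) p₀ := by
  induction M with
  | zero => simpa using hasStrictFDerivAt_const 1 p₀
  | succ M ih =>
      have hz : HasStrictFDerivAt (fun p : (Fin (m+1) → ℝ) × (Fin (m+1) → ℝ) => p.1 i)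
          ((proj i).comp (fst ℝ (Fin (m+1) → ℝ) (Fin (m+1) → ℝ))) p₀ :=
        ((proj i).comp (fst ℝ (Fin (m+1) → ℝ) (Fin (m+1) → ℝ))).hasStrictFDerivAt
      have h := ih.mul hz
      have heq : (fun p : (Fin (m+1) → ℝ) × (Fin (m+1) → ℝ) => p.1 i ^ M * p.1 i) =
          fun p => p.1 i ^ (M + 1) := by
        funext p; rw [← pow_succ]
      rw [show ((fun p : (Fin (m+1) → ℝ) × (Fin (m+1) → ℝ) => p.1 i ^ M) * fun p => p.1 i) =
          fun p => p.1 i ^ (M + 1) from heq] at h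
      rw [smul_smul, ← add_smul] at h
      rw [show ((↑(M + 1):ℝ) * p₀.1 i ^ (M + 1 - 1)) =
          p₀.1 i ^ M + p₀.1 i * (↑M * p₀.1 i ^ (M - 1)) from ?_]
      · exact h
      rcases Nat.eq_zero_or_pos M with hM | hM
      · subst hM; simp
      · rw [← Nat.succ_pred_eq_of_pos hM]
        push_cast [pow_succ]
        ring

open ContinuousLinearMap in
lemma keyOpen (m : ℕ) : IsOpen {l : Fin (m+1) → ℝ | (∀ i, 0 < l i) ∧
    ∃ z : Fin (m+1) → ℝ, Function.Injective z ∧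
      ∀ k : Fin m, ∑ i, l i * z i ^ ((k:ℕ)+1) = gaussMoment ((k:ℕ)+1)} := by
  rw [isOpen_iff_mem_nhds]
  rintro l₀ ⟨hpos, z₀, hzinj, hmom⟩
  set E := (Fin (m+1) → ℝ) × (Fin (m+1) → ℝ)
  set p₀ : E := (z₀, l₀) with hp₀
  set Pz : Fin (m+1) → (E →L[ℝ] ℝ) :=
    fun i => (proj i).comp (fst ℝ (Fin (m+1) → ℝ) (Fin (m+1) → ℝ)) with hPz
  set Pl : Fin (m+1) → (E →L[ℝ] ℝ) :=
    fun i => (proj i).comp (snd ℝ (Fin (m+1) → ℝ) (Fin (m+1) → ℝ)) with hPl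
  set D : Fin m → (E →L[ℝ] ℝ) := fun k =>
    ∑ i, ((l₀ i * ((((k:ℕ)+1 : ℕ) : ℝ) * z₀ i ^ (k:ℕ))) • Pz i
      + (z₀ i ^ ((k:ℕ)+1)) • Pl i) with hD
  set F : E → (Fin m → ℝ) × (Fin (m+1) → ℝ) :=
    fun p => (fun k => ∑ i, p.2 i * p.1 i ^ ((k:ℕ)+1), p.2) with hF
  set F' : E →L[ℝ] (Fin m → ℝ) × (Fin (m+1) → ℝ) :=
    (ContinuousLinearMap.pi D).prod (snd ℝ (Fin (m+1) → ℝ) (Fin (m+1) → ℝ)) with hF'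
  -- strict differentiability
  have hFd : HasStrictFDerivAt F F' p₀ := by
    refine HasStrictFDerivAt.prodMk ?_
      ((snd ℝ (Fin (m+1) → ℝ) (Fin (m+1) → ℝ)).hasStrictFDerivAt)
    refine hasStrictFDerivAt_pi.2 fun k => ?_
    refine HasStrictFDerivAt.fun_sum fun i _ => ?_
    have hl : HasStrictFDerivAt (fun p : E => p.2 i) (Pl i) p₀ := (Pl i).hasStrictFDerivAt
    have h := hl.mul (powD p₀ i ((k:ℕ)+1))
    simp only [Nat.add_sub_cancel] at h
    rw [smul_smul] at h
    exact h
  -- surjectivity of the derivative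
  have hsurj : LinearMap.range (F' : E →ₗ[ℝ] (Fin m → ℝ) × (Fin (m+1) → ℝ)) = ⊤ := by
    rw [LinearMap.range_eq_top]
    rintro ⟨u, v⟩
    set A : Matrix (Fin (m+1)) (Fin (m+1)) ℝ := (Matrix.vandermonde z₀).transpose with hA
    have hdet : IsUnit A.det := by
      rw [isUnit_iff_ne_zero, hA, Matrix.det_transpose]
      exact Matrix.det_vandermonde_ne_zero_iff.2 hzinj
    set w : Fin m → ℝ := fun k => u k - ∑ i, z₀ i ^ ((k:ℕ)+1) * v i with hw
    set c : Fin (m+1) → ℝ :=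
      fun j => if h : (j:ℕ) < m then w ⟨j, h⟩ / ((j:ℕ)+1) else 0 with hc
    set y : Fin (m+1) → ℝ := A⁻¹.mulVec c with hy
    have hAy : A.mulVec y = c := by
      rw [hy, Matrix.mulVec_mulVec, Matrix.mul_nonsing_inv _ hdet, Matrix.one_mulVec]
    refine ⟨(fun i => y i / l₀ i, v), ?_⟩
    have hsum : ∀ k : Fin m, ∑ i, z₀ i ^ (k:ℕ) * y i = w k / ((k:ℕ)+1) := by
      intro k
      have h1 := congrFun hAy (Fin.castSucc k)
      rw [Matrix.mulVec, dotProduct] at h1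
      simp only [hA, Matrix.transpose_apply, Matrix.vandermonde_apply, hc,
        Fin.coe_castSucc, k.isLt, dif_pos, Fin.eta] at h1
      exact h1
    have h2 : F' (fun i => y i / l₀ i, v) = (u, v) := by
      refine Prod.ext ?_ rfl
      funext k
      show D k (fun i => y i / l₀ i, v) = u k
      rw [hD]
      simp only [ContinuousLinearMap.sum_apply, ContinuousLinearMap.add_apply,
        ContinuousLinearMap.smul_apply, hPz, hPl, ContinuousLinearMap.comp_apply,
        ContinuousLinearMap.coe_fst', ContinuousLinearMap.coe_snd', proj_apply,
        smul_eq_mul]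
      show ∑ x, (l₀ x * ((((k:ℕ)+1 : ℕ) : ℝ) * z₀ x ^ (k:ℕ)) * (y x / l₀ x)
        + z₀ x ^ ((k:ℕ)+1) * v x) = u k
      have h4 : ∀ i : Fin (m+1), l₀ i * (y i / l₀ i) = y i := by
        intro i
        rw [mul_comm, div_mul_cancel₀ _ (hpos i).ne']
      have hterm : ∀ i : Fin (m+1),
          l₀ i * ((((k:ℕ)+1 : ℕ) : ℝ) * z₀ i ^ (k:ℕ)) * (y i / l₀ i)
            + z₀ i ^ ((k:ℕ)+1) * v i
          = (((k:ℕ)+1 : ℕ) : ℝ) * (z₀ i ^ (k:ℕ) * y i) + z₀ i ^ ((k:ℕ)+1) * v i := by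
        intro i
        rw [mul_comm (l₀ i), mul_assoc, h4 i]
        ring
      rw [Finset.sum_congr rfl fun i _ => hterm i, Finset.sum_add_distrib,
        ← Finset.mul_sum, hsum k]
      have h5 : ((k:ℕ) + 1 : ℝ) ≠ 0 := by positivity
      push_cast
      rw [mul_div_cancel₀ _ h5, hw]
      ring
    exact h2
  -- conclude via the open mapping property
  have hmap := hFd.map_nhds_eq_of_surj hsurj
  set U : Set E := {p | Function.Injective p.1 ∧ ∀ i, 0 < p.2 i} with hU
  have hUopen : IsOpen U := by
    apply IsOpen.inter
    · show IsOpen {p : E | Function.Injective p.1}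
      have : {p : E | Function.Injective p.1} =
          ⋂ (i) (j) (_ : i ≠ j), {p : E | p.1 i ≠ p.1 j} := by
        ext p
        simp only [Set.mem_setOf_eq, Set.mem_iInter]
        constructor
        · intro h i j hij; exact fun he => hij (h he)
        · intro h a b hab
          by_contra hne
          exact h a b hne hab
      rw [this]
      refine isOpen_iInter_of_finite fun i => isOpen_iInter_of_finite fun j =>
        isOpen_iInter_of_finite fun _ => ?_
      exact isOpen_ne_fun ((continuous_apply i).comp continuous_fst)
        ((continuous_apply j).comp continuous_fst)
    · show IsOpen {p : E | ∀ i, 0 < p.2 i}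
      have : {p : E | ∀ i, 0 < p.2 i} = ⋂ i, {p : E | 0 < p.2 i} := by
        ext p; simp
      rw [this]
      exact isOpen_iInter_of_finite fun i =>
        isOpen_lt continuous_const ((continuous_apply i).comp continuous_snd)
  have hUnhds : U ∈ nhds p₀ := hUopen.mem_nhds ⟨hzinj, hpos⟩
  have himg : F '' U ∈ nhds (F p₀) := by
    rw [← hmap]
    exact Filter.mem_map.2 (Filter.mem_of_superset hUnhds (Set.subset_preimage_image F U))
  have hFp₀ : F p₀ = (fun k : Fin m => gaussMoment ((k:ℕ)+1), l₀) := by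
    refine Prod.ext ?_ rfl
    funext k
    exact hmom k
  have hW : (fun l : Fin (m+1) → ℝ => ((fun k : Fin m => gaussMoment ((k:ℕ)+1), l) :
      (Fin m → ℝ) × (Fin (m+1) → ℝ))) ⁻¹' (F '' U) ∈ nhds l₀ := by
    apply ContinuousAt.preimage_mem_nhds
    · exact (continuous_const.prodMk continuous_id).continuousAt
    · rwa [← hFp₀]
  refine Filter.mem_of_superset hW ?_
  rintro l ⟨p, hpU, hFp⟩
  have hps : p.2 = l := congrArg Prod.snd hFp
  have hpf : (fun k : Fin m => ∑ i, p.2 i * p.1 i ^ ((k:ℕ)+1)) =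
      fun k : Fin m => gaussMoment ((k:ℕ)+1) := congrArg Prod.fst hFp
  refine ⟨fun i => hps ▸ hpU.2 i, p.1, hpU.1, fun k => ?_⟩
  have := congrFun hpf k
  rwa [hps] at this


theorem stmt14 (n : ℕ) (hn : 0 < n) :
    (∀ z : Fin n → ℝ, Function.Injective z →
      ∃! l : Fin n → ℝ, ∀ k : Fin n, ∑ i, l i * z i ^ (k : ℕ) = gaussMoment k) ∧
    IsOpen {l : {l : Fin n → ℝ // ∑ i, l i = 1} |
      ∃ z : Fin n → ℝ, Function.Injective z ∧ (∀ i, 0 < l.1 i) ∧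
        ∀ k : Fin n, ∑ i, l.1 i * z i ^ (k : ℕ) = gaussMoment k} := by
  refine ⟨fun z hz => part1 n z hz, ?_⟩
  obtain ⟨m, rfl⟩ : ∃ m, n = m + 1 := ⟨n - 1, by omega⟩
  have hset : {l : {l : Fin (m+1) → ℝ // ∑ i, l i = 1} |
      ∃ z : Fin (m+1) → ℝ, Function.Injective z ∧ (∀ i, 0 < l.1 i) ∧
        ∀ k : Fin (m+1), ∑ i, l.1 i * z i ^ (k : ℕ) = gaussMoment k} =
      Subtype.val ⁻¹' {v : Fin (m+1) → ℝ | (∀ i, 0 < v i) ∧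
        ∃ z : Fin (m+1) → ℝ, Function.Injective z ∧
          ∀ k : Fin m, ∑ i, v i * z i ^ ((k:ℕ)+1) = gaussMoment ((k:ℕ)+1)} := by
    ext l
    constructor
    · rintro ⟨z, hzinj, hp, hm⟩
      refine ⟨hp, z, hzinj, fun k => ?_⟩
      have := hm k.succ
      rwa [Fin.val_succ] at this
    · rintro ⟨hp, z, hzinj, hm⟩
      refine ⟨z, hzinj, hp, fun k => ?_⟩
      induction k using Fin.cases with
      | zero =>
          simp only [Fin.val_zero, pow_zero, mul_one]
          rw [l.2, gm0]
      | succ j =>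
          have := hm j
          rwa [Fin.val_succ]
  rw [hset]
  exact (keyOpen m).preimage continuous_subtype_val
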